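/- Assume condition (*), and let I = [i* : i*+n−1] be the full maximal interval. Then ā(x) = a_I(x) < a_J(x) for every M-interval J of length < n. -/

import Mathlib

open Finset

/-- Interval average `a_{[a:b]}(x) = (x_a + … + x_b)/(b-a+1)`. -/
noncomputable def iavg (x : ℤ → ℝ) (a b : ℤ) : ℝ :=
  (∑ j ∈ Finset.Icc a b, x j) / ((b - a + 1 : ℤ) : ℝ)

/-- Right maximal function `M^r x(i) = sup_{r ≥ 1} a_{[i : i+r−1]}(x)`. -/
noncomputable def Mr (x : ℤ → ℝ) (i : ℤ) : ℝ :=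
  sSup {a : ℝ | ∃ r : ℕ, 1 ≤ r ∧ a = iavg x i (i + (r : ℤ) - 1)}

/-- Condition (*): `x_1, …, x_n` are linearly independent over `ℚ`. -/
def StarCond (n : ℕ) (x : ℤ → ℝ) : Prop :=
  LinearIndependent ℚ (fun i : Fin n => x ((i : ℤ) + 1))

/-- `[i:k]` is a (short) maximal interval: `0 ≤ k − i < n` and
`a_{[i:k]}(x) = M^r x(i)`. -/
def IsMaxInt (n : ℕ) (x : ℤ → ℝ) (i k : ℤ) : Prop :=
  i ≤ k ∧ k - i < (n : ℤ) ∧ iavg x i k = Mr x i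

/-- `[i:k]` is an `M`-interval: maximal, and no `[i:k']` with `i ≤ k' < k`
is maximal. -/
def IsMInt (n : ℕ) (x : ℤ → ℝ) (i k : ℤ) : Prop :=
  IsMaxInt n x i k ∧ ∀ k' : ℤ, i ≤ k' → k' < k → iavg x i k' ≠ Mr x i

/-- One-step shift invariance of sums over windows of length `n`. -/
lemma sum_shift (n : ℕ) (hn : 1 ≤ n) (x : ℤ → ℝ) (hper : ∀ i, x (i + (n : ℤ)) = x i)
    (i : ℤ) : ∑ j ∈ Icc (i+1) (i + (n:ℤ)), x j = ∑ j ∈ Icc i (i + (n:ℤ) - 1), x j := by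
  have h1 : Icc (i+1) (i+(n:ℤ)) = insert (i+(n:ℤ)) (Icc (i+1) (i+(n:ℤ)-1)) := by
    ext m; simp only [mem_Icc, mem_insert]; omega
  have h2 : Icc i (i+(n:ℤ)-1) = insert i (Icc (i+1) (i+(n:ℤ)-1)) := by
    ext m; simp only [mem_Icc, mem_insert]; omega
  rw [h1, h2, Finset.sum_insert (by simp only [mem_Icc]; omega),
    Finset.sum_insert (by simp only [mem_Icc]; omega), hper i]

/-- Every window of length `n` has the same sum as `[1:n]`. -/
lemma sum_period (n : ℕ) (hn : 1 ≤ n) (x : ℤ → ℝ) (hper : ∀ i, x (i + (n : ℤ)) = x i)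
    (i : ℤ) : ∑ j ∈ Icc i (i + (n:ℤ) - 1), x j = ∑ j ∈ Icc 1 (n:ℤ), x j := by
  have key : ∀ d : ℤ, ∑ j ∈ Icc (1+d) (1+d+(n:ℤ)-1), x j = ∑ j ∈ Icc 1 (n:ℤ), x j := by
    intro d
    induction d using Int.induction_on with
    | zero => norm_num
    | succ k ih =>
      have h := sum_shift n hn x hper (1+k)
      rw [show 1+((k:ℤ)+1)+(n:ℤ)-1 = 1+(k:ℤ)+(n:ℤ) by ring,
        show 1+((k:ℤ)+1) = 1+(k:ℤ)+1 by ring, h, ih]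
    | pred k ih =>
      have h := sum_shift n hn x hper (1-((k:ℤ)+1))
      rw [show (1:ℤ)+(-(k:ℤ)-1)+(n:ℤ)-1 = 1-((k:ℤ)+1)+(n:ℤ)-1 by ring,
        show (1:ℤ)+(-(k:ℤ)-1) = 1-((k:ℤ)+1) by ring, ← h,
        show 1-((k:ℤ)+1)+1 = 1+(-(k:ℤ)) by ring, show 1-((k:ℤ)+1)+(n:ℤ) = 1+(-(k:ℤ))+(n:ℤ)-1 by ring, ih]
  have := key (i - 1)
  rwa [show 1+(i-1) = i by ring] at this

/-- Periodicity for arbitrary integer multiples of the period. -/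
lemma per_mul (n : ℕ) (x : ℤ → ℝ) (hper : ∀ i, x (i + (n : ℤ)) = x i)
    (q m : ℤ) : x (m + q * n) = x m := by
  induction q using Int.induction_on with
  | zero => simp
  | succ k ih =>
    have := hper (m + k * n)
    rw [show m + ((k:ℤ)+1) * n = m + (k:ℤ)*n + (n:ℤ) by ring, this, ih]
  | pred k ih =>
    have := hper (m + (-((k:ℤ)+1)) * n)
    rw [show m + (-((k:ℤ)+1)) * (n:ℤ) + (n:ℤ) = m + (-(k:ℤ)) * n by ring] at this
    rw [show (-(k:ℤ)-1) * (n:ℤ) = (-((k:ℤ)+1)) * (n:ℤ) by ring, ← this, ih]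

/-- Each term is at most the sum over a full period. -/
lemma term_le (n : ℕ) (hn : 1 ≤ n) (x : ℤ → ℝ) (hpos : ∀ i, 0 ≤ x i)
    (hper : ∀ i, x (i + (n : ℤ)) = x i) (j : ℤ) :
    x j ≤ ∑ m ∈ Icc 1 (n:ℤ), x m := by
  have hj : j ∈ Icc j (j + (n:ℤ) - 1) := by simp only [mem_Icc]; omega
  calc x j ≤ ∑ m ∈ Icc j (j + (n:ℤ) - 1), x m :=
        Finset.single_le_sum (fun m _ => hpos m) hj
    _ = _ := sum_period n hn x hper j

/-- The set of right averages is bounded above. -/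
lemma mr_bdd (n : ℕ) (hn : 1 ≤ n) (x : ℤ → ℝ) (hpos : ∀ i, 0 ≤ x i)
    (hper : ∀ i, x (i + (n : ℤ)) = x i) (i : ℤ) :
    BddAbove {a : ℝ | ∃ r : ℕ, 1 ≤ r ∧ a = iavg x i (i + (r : ℤ) - 1)} := by
  refine ⟨∑ m ∈ Icc 1 (n:ℤ), x m, ?_⟩
  rintro a ⟨r, hr, rfl⟩
  unfold iavg
  rw [show (i + (r:ℤ) - 1) - i + 1 = (r:ℤ) by ring]
  rw [div_le_iff₀ (by positivity)]
  have hcard : (Icc i (i + (r:ℤ) - 1)).card = r := by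
    rw [Int.card_Icc]; omega
  calc ∑ j ∈ Icc i (i + (r:ℤ) - 1), x j
      ≤ ∑ _j ∈ Icc i (i + (r:ℤ) - 1), ∑ m ∈ Icc 1 (n:ℤ), x m :=
        Finset.sum_le_sum (fun m _ => term_le n hn x hpos hper m)
    _ = (∑ m ∈ Icc 1 (n:ℤ), x m) * r := by
        rw [Finset.sum_const, hcard, nsmul_eq_mul, mul_comm]
    _ = _ := by push_cast; ring

/-- The global average is a lower bound for the right maximal function. -/
lemma abar_le_Mr (n : ℕ) (hn : 1 ≤ n) (x : ℤ → ℝ) (hpos : ∀ i, 0 ≤ x i)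
    (hper : ∀ i, x (i + (n : ℤ)) = x i) (i : ℤ) :
    iavg x 1 (n:ℤ) ≤ Mr x i := by
  have hmem : iavg x i (i + (n:ℤ) - 1) ∈
      {a : ℝ | ∃ r : ℕ, 1 ≤ r ∧ a = iavg x i (i + (r : ℤ) - 1)} := ⟨n, hn, rfl⟩
  have h := le_csSup (mr_bdd n hn x hpos hper i) hmem
  have heq : iavg x 1 (n:ℤ) = iavg x i (i + (n:ℤ) - 1) := by
    unfold iavg
    rw [sum_period n hn x hper i, show (i + (n:ℤ) - 1) - i + 1 = (n:ℤ) by ring,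
      show ((n:ℤ) - 1 + 1) = (n:ℤ) by ring]
  rw [heq]; exact h

/-- Under condition (*), the average over a short interval never equals the
global average. -/
lemma avg_ne (n : ℕ) (hn : 1 ≤ n) (x : ℤ → ℝ)
    (hper : ∀ i, x (i + (n : ℤ)) = x i) (hstar : StarCond n x)
    (j k : ℤ) (hjk : j ≤ k) (hlen : k - j + 1 < (n:ℤ)) :
    iavg x j k ≠ iavg x 1 (n:ℤ) := by
  intro heq
  set ℓ : ℤ := k - j + 1 with hℓ
  have hℓ1 : 1 ≤ ℓ := by omega
  set S : ℝ := ∑ m ∈ Icc 1 (n:ℤ), x m with hS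
  have hnpos : (0:ℤ) < (n:ℤ) := by exact_mod_cast hn
  -- cross-multiplied relation
  have hrel : (n:ℝ) * ∑ m ∈ Icc j k, x m = (ℓ:ℝ) * S := by
    unfold iavg at heq
    have hd1 : ((k - j + 1 : ℤ):ℝ) ≠ 0 := by
      exact_mod_cast (by omega : (k - j + 1:ℤ) ≠ 0)
    have hd2 : (((n:ℤ) - 1 + 1 : ℤ):ℝ) ≠ 0 := by
      exact_mod_cast (by omega : ((n:ℤ) - 1 + 1 : ℤ) ≠ 0)
    rw [div_eq_div_iff hd1 hd2] at heq
    push_cast at heq ⊢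
    rw [hℓ]; push_cast; linarith [heq]
  -- residue map
  set r : ℤ → ℤ := fun m => (m - 1) % (n:ℤ) + 1 with hr
  have hrmem : ∀ m, r m ∈ Icc (1:ℤ) (n:ℤ) := by
    intro m
    simp only [hr, mem_Icc]
    have h1 := Int.emod_nonneg (m - 1) (by omega : (n:ℤ) ≠ 0)
    have h2 := Int.emod_lt_of_pos (m - 1) hnpos
    omega
  have hxr : ∀ m, x (r m) = x m := by
    intro m
    have e : (m - 1) / (n:ℤ) * (n:ℤ) + (m - 1) % (n:ℤ) = m - 1 := by
      linarith [Int.mul_ediv_add_emod (m - 1) (n:ℤ)]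
    have h := per_mul n x hper ((m - 1) / (n:ℤ)) (r m)
    rw [show r m + (m - 1) / (n:ℤ) * (n:ℤ) = m by simp only [hr]; linarith [e]] at h
    exact h.symm
  -- injectivity of the residue map on [j,k]
  have hinj : Set.InjOn r (Icc j k) := by
    intro m1 h1 m2 h2 h
    simp only [Finset.coe_Icc, Set.mem_Icc] at h1 h2
    have hmod : (m1 - 1) % (n:ℤ) = (m2 - 1) % (n:ℤ) := by
      simp only [hr] at h; omega
    have hdvd : (n:ℤ) ∣ (m1 - 1) - (m2 - 1) := Int.ModEq.dvd hmod.symm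
    obtain ⟨c, hc⟩ := hdvd
    have hb1 : (n:ℤ) * c ≤ k - j := by linarith [h1.1, h1.2, h2.1, h2.2]
    have hb2 : -(k - j) ≤ (n:ℤ) * c := by linarith [h1.1, h1.2, h2.1, h2.2]
    have hc0 : c = 0 := by
      rcases lt_trichotomy c 0 with h' | h' | h'
      · have : (n:ℤ) * c ≤ (n:ℤ) * (-1) :=
          mul_le_mul_of_nonneg_left (by omega) (by omega)
        linarith
      · exact h'
      · have : (n:ℤ) * 1 ≤ (n:ℤ) * c :=
          mul_le_mul_of_nonneg_left (by omega) (by omega)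
        linarith
    rw [hc0, mul_zero] at hc; omega
  set T : Finset ℤ := (Icc j k).image r with hT
  have hTsub : T ⊆ Icc (1:ℤ) (n:ℤ) := by
    intro s hs
    simp only [hT, Finset.mem_image] at hs
    obtain ⟨m, _, rfl⟩ := hs
    exact hrmem m
  have hTsum : ∑ s ∈ T, x s = ∑ m ∈ Icc j k, x m := by
    rw [hT, Finset.sum_image (fun a ha b hb h => hinj (by simpa using ha) (by simpa using hb) h)]
    exact Finset.sum_congr rfl (fun m _ => hxr m)
  -- vanishing combination over Icc 1 n
  have hsum0 : ∑ s ∈ Icc (1:ℤ) (n:ℤ),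
      (if s ∈ T then ((n:ℝ) - (ℓ:ℝ)) else -(ℓ:ℝ)) * x s = 0 := by
    simp only [ite_mul]
    rw [Finset.sum_ite]
    have hf1 : (Icc (1:ℤ) (n:ℤ)).filter (· ∈ T) = T := by
      rw [Finset.filter_mem_eq_inter, Finset.inter_eq_right.mpr hTsub]
    have hf2 : (Icc (1:ℤ) (n:ℤ)).filter (fun s => s ∉ T) = Icc (1:ℤ) (n:ℤ) \ T := by
      rw [Finset.sdiff_eq_filter]
    rw [hf1, hf2, ← Finset.mul_sum, ← Finset.mul_sum,
      Finset.sum_sdiff_eq_sub hTsub, hTsum, ← hS]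
    linear_combination hrel
  -- transport to `Fin n` and apply linear independence
  have hstar' := Fintype.linearIndependent_iff.mp hstar
  set g : Fin n → ℚ := fun i => if ((i:ℤ)+1) ∈ T then (n:ℚ) - (ℓ:ℚ) else -(ℓ:ℚ) with hg
  have hcomb : ∑ i : Fin n, g i • x ((i:ℤ) + 1) = 0 := by
    have himage : Icc (1:ℤ) (n:ℤ) = Finset.image (fun i : ℕ => (i:ℤ)+1) (Finset.range n) := by
      ext m
      simp only [mem_Icc, Finset.mem_image, Finset.mem_range]
      constructor
      · intro h; exact ⟨(m-1).toNat, by omega, by omega⟩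
      · rintro ⟨a, ha, rfl⟩; omega
    rw [himage, Finset.sum_image (by intro a _ b _ h; have h' : (a:ℤ)+1 = (b:ℤ)+1 := h; omega)] at hsum0
    rw [← Fin.sum_univ_eq_sum_range
      (fun i : ℕ => (if ((i:ℤ)+1) ∈ T then ((n:ℝ) - (ℓ:ℝ)) else -(ℓ:ℝ)) * x ((i:ℤ)+1))] at hsum0
    rw [← hsum0]
    apply Finset.sum_congr rfl
    intro i _
    simp only [hg, Rat.smul_def, apply_ite (fun q : ℚ => (q:ℝ))]
    push_cast
    ring_nf
  have h0 : g ⟨0, hn⟩ = 0 := hstar' g hcomb ⟨0, hn⟩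
  simp only [hg] at h0
  split_ifs at h0 with h
  · have h1 : (n:ℚ) = (ℓ:ℚ) := by linarith
    have : (n:ℤ) = ℓ := by exact_mod_cast h1
    omega
  · have h1 : (ℓ:ℚ) = 0 := by linarith
    have : ℓ = 0 := by exact_mod_cast h1
    omega

/-- If `I = [i* : i*+n−1]` is the full maximal interval, then
`ā(x) = a_I(x) < a_J(x)` for every `M`-interval `J` of length `< n`. -/
theorem full_maximal_interval_least_avg (n : ℕ) (hn : 1 ≤ n) (x : ℤ → ℝ)
    (hpos : ∀ i, 0 ≤ x i) (hper : ∀ i, x (i + (n : ℤ)) = x i)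
    (hstar : StarCond n x) (istar : ℤ)
    (hfull : iavg x istar (istar + (n : ℤ) - 1) = Mr x istar) :
    iavg x 1 (n : ℤ) = iavg x istar (istar + (n : ℤ) - 1) ∧
    ∀ j k : ℤ, IsMInt n x j k → k - j + 1 < (n : ℤ) →
      iavg x 1 (n : ℤ) < iavg x j k := by
  constructor
  · unfold iavg
    rw [sum_period n hn x hper istar, show (istar + (n:ℤ) - 1) - istar + 1 = (n:ℤ) by ring,
      show ((n:ℤ) - 1 + 1) = (n:ℤ) by ring]
  · rintro j k ⟨⟨hjk, hkjn, hmax⟩, -⟩ hlen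
    have hge : iavg x 1 (n:ℤ) ≤ iavg x j k := by
      rw [hmax]; exact abar_le_Mr n hn x hpos hper j
    exact lt_of_le_of_ne hge
      (fun h => avg_ne n hn x hper hstar j k hjk hlen h.symm)
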